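/- There exist constants c > 0 and δ > 0 such that the following holds with m = ⌈c·n⌉: with high probability as n → ∞, the uniform random graph G(n,m) has the property that for every set S of ⌈n/2⌉ vertices, the subgraph of G(n,m) induced by S contains a connected component with at least δ·n vertices. -/

import Mathlib

open Filter Topology

noncomputable section

/-- The sample space of `G(n,m)`: edge sets, i.e. sets of `m` non-diagonal unordered pairs
of vertices of `{0,…,n-1}`, each such set being equally likely. -/
def edgeSets (n m : ℕ) : Set (Finset (Sym2 (Fin n))) :=
  {E | E.card = m ∧ ∀ e ∈ E, ¬ e.IsDiag}

/-- The property that in the graph with edge set `E`, every set `S` of `⌈n/2⌉` vertices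
induces a subgraph containing a connected component with at least `δ·n` vertices. -/
def everyHalfSetHasBigComponent (n : ℕ) (δ : ℝ) (E : Finset (Sym2 (Fin n))) : Prop :=
  ∀ S : Finset (Fin n), S.card = ⌈(n : ℝ) / 2⌉₊ →
    ∃ v : (S : Set (Fin n)),
      δ * n ≤ (Nat.card {w // (SimpleGraph.induce (S : Set (Fin n))
          (SimpleGraph.fromEdgeSet (E : Set (Sym2 (Fin n))))).Reachable v w} : ℝ)

attribute [local instance] Classical.propDecidable


lemma choose_pred_mul (a m : ℕ) : (a + 1 - m) * (a+1).choose m = (a+1) * a.choose m := by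
  have h1 := Nat.add_one_mul_choose_eq a m
  rw [Nat.choose_succ_right_eq (a+1) m] at h1
  rw [mul_comm (a+1-m)]
  exact h1.symm

lemma choose_sub_le (N m K : ℕ) (hK : K ≤ N) (hm : m ≤ N) :
    (((N - K).choose m : ℝ)) ≤ ((N - m : ℝ)/N)^K * (N.choose m) := by
  rcases Nat.eq_zero_or_pos N with hN | hN
  · subst hN
    interval_cases K
    interval_cases m
    simp
  have hN0 : (0:ℝ) < N := by exact_mod_cast hN
  have hbase : (0:ℝ) ≤ (N - m : ℝ)/N := by
    apply div_nonneg _ (le_of_lt hN0)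
    have : (m:ℝ) ≤ N := by exact_mod_cast hm
    linarith
  induction K with
  | zero => simp
  | succ K ih =>
    have hK' : K ≤ N := by omega
    have ih' := ih hK'
    have ha : N - (K+1) = (N - K - 1) := by omega
    rw [ha]
    by_cases hmk : m ≤ N - K
    · have hNK : 0 < N - K := by omega
      have hid := choose_pred_mul (N - K - 1) m
      have hrw : N - K - 1 + 1 = N - K := by omega
      rw [hrw] at hid
      have hNKr : (0:ℝ) < ((N - K : ℕ) : ℝ) := by exact_mod_cast hNK
      have hidr : ((N - K - m : ℕ) : ℝ) * ((N-K).choose m : ℝ)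
          = ((N - K : ℕ) : ℝ) * ((N - K - 1).choose m : ℝ) := by exact_mod_cast hid
      have hsub : ((N - K - m : ℕ) : ℝ) = ((N-K:ℕ):ℝ) - m := by
        push_cast [Nat.cast_sub hmk]
        ring
      have heq : ((N - K - 1).choose m : ℝ)
          = (((N-K:ℕ):ℝ) - m)/((N-K:ℕ):ℝ) * ((N-K).choose m : ℝ) := by
        rw [div_mul_eq_mul_div, eq_div_iff (ne_of_gt hNKr), ← hsub]
        linarith [hidr]
      have hfrac : (((N-K:ℕ):ℝ) - m)/((N-K:ℕ):ℝ) ≤ ((N:ℝ) - m)/N := by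
        rw [div_le_div_iff₀ hNKr hN0]
        have h1 : ((N-K:ℕ):ℝ) ≤ N := by exact_mod_cast Nat.sub_le N K
        have h2 : (0:ℝ) ≤ m := by positivity
        nlinarith
      have hnn : (0:ℝ) ≤ ((N-K).choose m : ℝ) := by positivity
      calc ((N - K - 1).choose m : ℝ)
          = (((N-K:ℕ):ℝ) - m)/((N-K:ℕ):ℝ) * ((N-K).choose m : ℝ) := heq
        _ ≤ ((N:ℝ) - m)/N * ((N-K).choose m : ℝ) := by
            apply mul_le_mul_of_nonneg_right hfrac hnn
        _ ≤ ((N:ℝ) - m)/N * (((N - m : ℝ)/N)^K * (N.choose m)) := by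
            apply mul_le_mul_of_nonneg_left ih' hbase
        _ = ((N - m : ℝ)/N)^(K+1) * (N.choose m) := by ring
    · have h0 : (N - K - 1).choose m = 0 := by
        apply Nat.choose_eq_zero_of_lt; omega
      rw [h0]
      push_cast
      positivity



def restr {n : ℕ} (S : Finset (Fin n)) (E : Finset (Sym2 (Fin n))) : SimpleGraph (Fin n) where
  Adj x y := x ≠ y ∧ s(x,y) ∈ E ∧ x ∈ S ∧ y ∈ S
  symm := by
    constructor
    rintro x y ⟨h1, h2, h3, h4⟩
    exact ⟨h1.symm, by rwa [Sym2.eq_swap], h4, h3⟩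
  loopless := ⟨by rintro x ⟨h, -⟩; exact h rfl⟩

lemma restr_mem_right {n : ℕ} {S : Finset (Fin n)} {E : Finset (Sym2 (Fin n))} {x y : Fin n}
    (h : (restr S E).Adj x y) : y ∈ S := h.2.2.2

lemma restr_reach_mem {n : ℕ} {S : Finset (Fin n)} {E : Finset (Sym2 (Fin n))} {x y : Fin n}
    (h : (restr S E).Reachable x y) (hx : x ∈ S) : y ∈ S := by
  obtain ⟨w⟩ := h
  induction w with
  | nil => exact hx
  | cons h p ih => exact ih (restr_mem_right h)

lemma reach_induce {n : ℕ} {S : Finset (Fin n)} {E : Finset (Sym2 (Fin n))} :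
    ∀ {x y : Fin n}, (restr S E).Walk x y → ∀ (hx : x ∈ S),
    ∃ hy : y ∈ S, (SimpleGraph.induce (S : Set (Fin n))
      (SimpleGraph.fromEdgeSet (E : Set (Sym2 (Fin n))))).Reachable ⟨x, hx⟩ ⟨y, hy⟩ := by
  intro x y w
  induction w with
  | nil => intro hx; exact ⟨hx, SimpleGraph.Reachable.refl _⟩
  | @cons u v q h p ih =>
    intro hu
    obtain ⟨hne, he, hupS, hvS⟩ := h
    obtain ⟨hy, r⟩ := ih hvS
    refine ⟨hy, SimpleGraph.Reachable.trans (SimpleGraph.Adj.reachable ?_) r⟩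
    show (SimpleGraph.fromEdgeSet (E : Set (Sym2 (Fin n)))).Adj u v
    rw [SimpleGraph.fromEdgeSet_adj]
    exact ⟨by exact_mod_cast he, hne⟩

lemma exists_closed_between {n : ℕ} (S : Finset (Fin n)) (H : SimpleGraph (Fin n))
    (hHS : ∀ x y, H.Adj x y → y ∈ S)
    (hsmall : ∀ x ∈ S, ((S.filter (H.Reachable x)).card : ℝ) < (S.card : ℝ)/3)
    (hS : 0 < S.card) :
    ∃ A, A ⊆ S ∧ (∀ x ∈ A, ∀ y, H.Reachable x y → y ∈ A) ∧
      (S.card : ℝ)/3 ≤ (A.card : ℝ) ∧ (A.card : ℝ) ≤ 2*(S.card : ℝ)/3 := by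
  have hreachS : ∀ x ∈ S, ∀ y, H.Reachable x y → y ∈ S := by
    intro x hx y h
    obtain ⟨w⟩ := h
    induction w with
    | nil => exact hx
    | cons h p ih => exact ih (hHS _ _ h)
  set P : Finset (Fin n) → Prop := fun A =>
    A ⊆ S ∧ (∀ x ∈ A, ∀ y, H.Reachable x y → y ∈ A) ∧ (A.card : ℝ) ≤ 2*(S.card : ℝ)/3
    with hP
  have hPempty : P ∅ := by
    refine ⟨Finset.empty_subset S, by simp, ?_⟩
    simp
    positivity
  have hne : (Finset.univ.filter P).Nonempty :=
    ⟨∅, by simpa using hPempty⟩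
  obtain ⟨A, hAmem, hAmax⟩ := Finset.exists_max_image (Finset.univ.filter P)
    (fun A => A.card) hne
  rw [Finset.mem_filter] at hAmem
  obtain ⟨-, hAS, hAclosed, hAcard⟩ := hAmem
  refine ⟨A, hAS, hAclosed, ?_, hAcard⟩
  by_contra hlt
  push_neg at hlt
  -- A is too small; extend it
  have hAcardS : A.card < S.card := by
    have h3 : (A.card : ℝ) < S.card := by
      have : (0:ℝ) < S.card := by exact_mod_cast hS
      linarith
    exact_mod_cast h3
  obtain ⟨x, hxS, hxA⟩ : ∃ x, x ∈ S ∧ x ∉ A := by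
    have : (S \ A).Nonempty := by
      rw [← Finset.card_pos, Finset.card_sdiff_of_subset hAS]
      omega
    obtain ⟨x, hx⟩ := this
    rw [Finset.mem_sdiff] at hx
    exact ⟨x, hx.1, hx.2⟩
  set A' := A ∪ S.filter (H.Reachable x) with hA'
  have hxA' : x ∈ A' := by
    apply Finset.mem_union_right
    rw [Finset.mem_filter]
    exact ⟨hxS, SimpleGraph.Reachable.refl x⟩
  have hPA' : P A' := by
    refine ⟨?_, ?_, ?_⟩
    · exact Finset.union_subset hAS (Finset.filter_subset _ _)
    · intro z hz y hy
      rw [Finset.mem_union] at hz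
      rcases hz with hz | hz
      · exact Finset.mem_union_left _ (hAclosed z hz y hy)
      · rw [Finset.mem_filter] at hz
        apply Finset.mem_union_right
        rw [Finset.mem_filter]
        exact ⟨hreachS x hxS y (hz.2.trans hy), hz.2.trans hy⟩
    · have h1 : A'.card ≤ A.card + (S.filter (H.Reachable x)).card :=
        Finset.card_union_le _ _
      have h2 := hsmall x hxS
      have h3 : (A'.card : ℝ) ≤ (A.card : ℝ) + ((S.filter (H.Reachable x)).card : ℝ) := by
        exact_mod_cast h1
      linarith
  have hlt2 : A.card < A'.card := by
    apply Finset.card_lt_card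
    constructor
    · exact Finset.subset_union_left
    · intro hsub
      exact hxA (hsub hxA')
  have := hAmax A' (by rw [Finset.mem_filter]; exact ⟨Finset.mem_univ _, hPA'⟩)
  omega

lemma card_reach_le {n : ℕ} {S : Finset (Fin n)} {E : Finset (Sym2 (Fin n))} {x : Fin n}
    (hx : x ∈ S) :
    (S.filter ((restr S E).Reachable x)).card ≤
      Nat.card {w // (SimpleGraph.induce (S : Set (Fin n))
        (SimpleGraph.fromEdgeSet (E : Set (Sym2 (Fin n))))).Reachable ⟨x, hx⟩ w} := by
  classical
  have hmem : ∀ y : {y // y ∈ S.filter ((restr S E).Reachable x)}, (y : Fin n) ∈ S :=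
    fun y => (Finset.mem_filter.mp y.2).1
  have hreach : ∀ y : {y // y ∈ S.filter ((restr S E).Reachable x)},
      (SimpleGraph.induce (S : Set (Fin n))
      (SimpleGraph.fromEdgeSet (E : Set (Sym2 (Fin n))))).Reachable ⟨x, hx⟩ ⟨y.1, hmem y⟩ := by
    intro y
    obtain ⟨w⟩ := (Finset.mem_filter.mp y.2).2
    obtain ⟨hy, r⟩ := reach_induce w hx
    exact r
  have hf : Function.Injective (fun y : {y // y ∈ S.filter ((restr S E).Reachable x)} =>
      (⟨⟨y.1, hmem y⟩, hreach y⟩ : {w // (SimpleGraph.induce (S : Set (Fin n))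
        (SimpleGraph.fromEdgeSet (E : Set (Sym2 (Fin n))))).Reachable ⟨x, hx⟩ w})) := by
    intro a b hab
    apply Subtype.ext
    simpa using hab
  have h1 := Nat.card_le_card_of_injective _ hf
  rwa [Nat.card_eq_fintype_card, Fintype.card_coe] at h1

lemma exists_cut {n : ℕ} (hn : 24 ≤ n) (E : Finset (Sym2 (Fin n))) (S : Finset (Fin n))
    (hScard : S.card = ⌈(n : ℝ)/2⌉₊)
    (hfail : ∀ v : (S : Set (Fin n)),
      (Nat.card {w // (SimpleGraph.induce (S : Set (Fin n))
        (SimpleGraph.fromEdgeSet (E : Set (Sym2 (Fin n))))).Reachable v w} : ℝ) < (1/24 : ℝ) * n) :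
    ∃ A B : Finset (Fin n), Disjoint A B ∧ n/7 ≤ A.card ∧ n/7 ≤ B.card ∧
      ∀ a ∈ A, ∀ b ∈ B, s(a,b) ∉ E := by
  have hs_half : ((n : ℝ)/2) ≤ (S.card : ℝ) := by
    rw [hScard]; exact Nat.le_ceil _
  have hn1 : (24 : ℝ) ≤ (n : ℝ) := by exact_mod_cast hn
  have hS0 : 0 < S.card := by
    have : (0:ℝ) < (S.card : ℝ) := by linarith
    exact_mod_cast this
  have hsmall : ∀ x ∈ S, (((S.filter ((restr S E).Reachable x)).card : ℝ)) < (S.card : ℝ)/3 := by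
    intro x hx
    have h1 := card_reach_le (E := E) hx
    have h2 := hfail ⟨x, hx⟩
    have h3 : ((S.filter ((restr S E).Reachable x)).card : ℝ) < (1/24 : ℝ) * n := by
      have := (Nat.cast_le (α := ℝ)).2 h1
      linarith
    linarith
  obtain ⟨A, hAS, hAclosed, hAlow, hAhigh⟩ :=
    exists_closed_between S (restr S E) (fun x y h => restr_mem_right h) hsmall hS0
  refine ⟨A, S \ A, Finset.disjoint_sdiff, ?_, ?_, ?_⟩
  · have h7 : ((n/7 : ℕ) : ℝ) ≤ (n : ℝ)/7 := Nat.cast_div_le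
    have : ((n/7 : ℕ) : ℝ) ≤ (A.card : ℝ) := by linarith
    exact_mod_cast this
  · have hcards : ((S \ A).card : ℝ) = (S.card : ℝ) - A.card := by
      rw [Finset.card_sdiff_of_subset hAS]
      have := Finset.card_le_card hAS
      push_cast [Nat.cast_sub this]
      ring
    have h7 : ((n/7 : ℕ) : ℝ) ≤ (n : ℝ)/7 := Nat.cast_div_le
    have : ((n/7 : ℕ) : ℝ) ≤ ((S \ A).card : ℝ) := by rw [hcards]; linarith
    exact_mod_cast this
  · intro a ha b hb hE
    rw [Finset.mem_sdiff] at hb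
    apply hb.2
    refine hAclosed a ha b (SimpleGraph.Adj.reachable ?_)
    refine ⟨?_, hE, hAS ha, hb.1⟩
    rintro rfl
    exact hb.2 ha

def Tn (n : ℕ) : Finset (Sym2 (Fin n)) := Finset.univ.filter (fun e => ¬ e.IsDiag)

lemma Tn_card (n : ℕ) : (Tn n).card = n.choose 2 := by
  classical
  rw [Tn, ← Fintype.card_subtype]
  rw [Sym2.card_subtype_not_diag, Fintype.card_fin]

def cross {n : ℕ} (A B : Finset (Fin n)) : Finset (Sym2 (Fin n)) :=
  (A ×ˢ B).image (fun p => s(p.1, p.2))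

lemma cross_card {n : ℕ} {A B : Finset (Fin n)} (h : Disjoint A B) :
    (cross A B).card = A.card * B.card := by
  classical
  rw [cross, Finset.card_image_of_injOn, Finset.card_product]
  rintro ⟨a, b⟩ hab ⟨a', b'⟩ hab' heq
  rw [Finset.mem_coe, Finset.mem_product] at hab hab'
  rw [Sym2.eq_iff] at heq
  rcases heq with ⟨rfl, rfl⟩ | ⟨rfl, rfl⟩
  · rfl
  · exact absurd hab'.2 (Finset.disjoint_left.mp h hab.1)

lemma cross_subset_Tn {n : ℕ} {A B : Finset (Fin n)} (h : Disjoint A B) :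
    cross A B ⊆ Tn n := by
  classical
  intro e he
  rw [cross, Finset.mem_image] at he
  obtain ⟨⟨a, b⟩, hab, rfl⟩ := he
  rw [Finset.mem_product] at hab
  rw [Tn, Finset.mem_filter]
  refine ⟨Finset.mem_univ _, ?_⟩
  rw [Sym2.mk_isDiag_iff]
  intro hh
  exact Finset.disjoint_left.mp h hab.1 (hh ▸ hab.2)

lemma bad_card_le {n : ℕ} (hn : 24 ≤ n) (m : ℕ) :
    (((Finset.powersetCard m (Tn n)).filter
      (fun E => ¬ everyHalfSetHasBigComponent n (1/24) E)).card : ℕ)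
    ≤ 4^n * ((n.choose 2 - (n/7)^2).choose m) := by
  classical
  set P : Finset (Finset (Fin n) × Finset (Fin n)) :=
    Finset.univ.filter (fun AB => Disjoint AB.1 AB.2 ∧ n/7 ≤ AB.1.card ∧ n/7 ≤ AB.2.card)
    with hPdef
  have hsub : ((Finset.powersetCard m (Tn n)).filter
      (fun E => ¬ everyHalfSetHasBigComponent n (1/24) E))
      ⊆ P.biUnion (fun AB => Finset.powersetCard m ((Tn n) \ cross AB.1 AB.2)) := by
    intro E hE
    rw [Finset.mem_filter, Finset.mem_powersetCard] at hE
    obtain ⟨⟨hET, hEcard⟩, hbad⟩ := hE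
    rw [everyHalfSetHasBigComponent] at hbad
    push_neg at hbad
    obtain ⟨S, hScard, hSfail⟩ := hbad
    have hfail' : ∀ v : (S : Set (Fin n)),
        (Nat.card {w // (SimpleGraph.induce (S : Set (Fin n))
          (SimpleGraph.fromEdgeSet (E : Set (Sym2 (Fin n))))).Reachable v w} : ℝ)
          < (1/24 : ℝ) * n := hSfail
    obtain ⟨A, B, hdisj, hA, hB, hnoedge⟩ := exists_cut hn E S hScard hfail'
    rw [Finset.mem_biUnion]
    refine ⟨(A, B), ?_, ?_⟩
    · rw [hPdef, Finset.mem_filter]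
      exact ⟨Finset.mem_univ _, hdisj, hA, hB⟩
    · rw [Finset.mem_powersetCard]
      refine ⟨?_, hEcard⟩
      intro e he
      rw [Finset.mem_sdiff]
      refine ⟨hET he, ?_⟩
      intro hecross
      rw [cross, Finset.mem_image] at hecross
      obtain ⟨⟨a, b⟩, hab, rfl⟩ := hecross
      rw [Finset.mem_product] at hab
      exact hnoedge a hab.1 b hab.2 he
  have hterm : ∀ AB ∈ P,
      (Finset.powersetCard m ((Tn n) \ cross AB.1 AB.2)).card
        ≤ (n.choose 2 - (n/7)^2).choose m := by
    intro AB hAB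
    rw [hPdef, Finset.mem_filter] at hAB
    obtain ⟨-, hdisj, hA, hB⟩ := hAB
    rw [Finset.card_powersetCard]
    apply Nat.choose_le_choose
    rw [Finset.card_sdiff_of_subset (cross_subset_Tn hdisj), Tn_card, cross_card hdisj]
    have : (n/7)^2 ≤ AB.1.card * AB.2.card := by
      rw [pow_two]
      exact Nat.mul_le_mul hA hB
    omega
  have hfinal : (((Finset.powersetCard m (Tn n)).filter
      (fun E => ¬ everyHalfSetHasBigComponent n (1/24) E)).card : ℕ)
      ≤ 4^n * ((n.choose 2 - (n/7)^2).choose m) := calc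
    (((Finset.powersetCard m (Tn n)).filter
      (fun E => ¬ everyHalfSetHasBigComponent n (1/24) E)).card : ℕ)
      ≤ (P.biUnion (fun AB => Finset.powersetCard m ((Tn n) \ cross AB.1 AB.2))).card :=
        Finset.card_le_card hsub
    _ ≤ ∑ AB ∈ P, (Finset.powersetCard m ((Tn n) \ cross AB.1 AB.2)).card :=
        Finset.card_biUnion_le
    _ ≤ P.card * ((n.choose 2 - (n/7)^2).choose m) := by
        have := Finset.sum_le_card_nsmul P _ _ hterm
        simpa [smul_eq_mul] using this
    _ ≤ 4^n * ((n.choose 2 - (n/7)^2).choose m) := by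
        have hP4 : P.card ≤ 4^n := calc
          P.card ≤ (Finset.univ : Finset (Finset (Fin n) × Finset (Fin n))).card :=
              Finset.card_le_univ _
          _ = 4^n := by
              rw [Finset.card_univ, Fintype.card_prod, Fintype.card_finset, Fintype.card_fin]
              rw [← mul_pow]
              norm_num
        exact Nat.mul_le_mul hP4 le_rfl
  exact hfinal

lemma edgeSets_eq (n m : ℕ) :
    edgeSets n m = ↑(Finset.powersetCard m (Tn n)) := by
  classical
  ext E
  rw [Finset.mem_coe, Finset.mem_powersetCard]
  constructor
  · rintro ⟨h1, h2⟩
    refine ⟨fun e he => ?_, h1⟩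
    rw [Tn, Finset.mem_filter]
    exact ⟨Finset.mem_univ _, h2 e he⟩
  · rintro ⟨hsub, h1⟩
    refine ⟨h1, fun e he => ?_⟩
    have := hsub he
    rw [Tn, Finset.mem_filter] at this
    exact this.2

lemma per_n {n : ℕ} (hn : 1000 ≤ n) :
    1 - (4*Real.exp (-3))^n ≤
      ((Set.ncard {E ∈ edgeSets n ⌈(100:ℝ) * n⌉₊ |
          everyHalfSetHasBigComponent n (1/24) E} : ℝ))
        / ((Set.ncard (edgeSets n ⌈(100:ℝ) * n⌉₊)) : ℝ)
    ∧ ((Set.ncard {E ∈ edgeSets n ⌈(100:ℝ) * n⌉₊ |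
          everyHalfSetHasBigComponent n (1/24) E} : ℝ))
        / ((Set.ncard (edgeSets n ⌈(100:ℝ) * n⌉₊)) : ℝ) ≤ 1 := by
  classical
  have hnR : (1000 : ℝ) ≤ (n : ℝ) := by exact_mod_cast hn
  -- m = 100 n
  have hm_eq : ⌈(100:ℝ) * n⌉₊ = 100*n := by
    rw [show ((100:ℝ) * n) = ((100*n : ℕ) : ℝ) by push_cast; ring, Nat.ceil_natCast]
  set m : ℕ := 100*n with hm
  set N : ℕ := n.choose 2 with hN
  set K : ℕ := (n/7)^2 with hKK
  have hNcast : (N : ℝ) = (n : ℝ) * ((n : ℝ) - 1) / 2 := by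
    rw [hN, Nat.cast_choose_two]
  have hmcast : (m : ℝ) = 100 * n := by rw [hm]; push_cast; ring
  have hq7 : ((n:ℝ) - 6) / 7 ≤ ((n/7 : ℕ) : ℝ) := by
    have h1 := Nat.div_add_mod n 7
    have h2 : n % 7 < 7 := Nat.mod_lt n (by norm_num)
    have h3 : n - 6 ≤ 7 * (n/7) := by omega
    have h4 : ((n:ℝ)) - 6 ≤ 7 * ((n/7 : ℕ) : ℝ) := by
      have h5 : ((n - 6 : ℕ) : ℝ) ≤ ((7 * (n/7) : ℕ) : ℝ) := by exact_mod_cast h3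
      push_cast [Nat.cast_sub (show 6 ≤ n by omega)] at h5
      linarith
    linarith
  have hKcast : ((n:ℝ) - 6)^2 / 49 ≤ (K : ℝ) := by
    rw [hKK]
    push_cast
    have h0 : (0:ℝ) ≤ ((n:ℝ) - 6) / 7 := by linarith
    calc ((n:ℝ) - 6)^2/49 = (((n:ℝ) - 6)/7)^2 := by ring
      _ ≤ ((n/7 : ℕ) : ℝ)^2 := by
          apply pow_le_pow_left₀ h0 hq7
  have hmN : m ≤ N := by
    have : (m : ℝ) ≤ (N : ℝ) := by
      rw [hNcast, hmcast]
      nlinarith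
    exact_mod_cast this
  have hKN : K ≤ N := by
    have hKn : (K : ℝ) ≤ (n:ℝ)^2/49 := by
      rw [hKK]
      push_cast
      have h1 : ((n/7 : ℕ) : ℝ) ≤ (n:ℝ)/7 := Nat.cast_div_le
      have h0 : (0:ℝ) ≤ ((n/7:ℕ):ℝ) := by positivity
      calc ((n/7 : ℕ) : ℝ)^2 ≤ ((n:ℝ)/7)^2 := by apply pow_le_pow_left₀ h0 h1
        _ = (n:ℝ)^2/49 := by ring
    have : (K : ℝ) ≤ (N : ℝ) := by
      rw [hNcast]
      nlinarith
    exact_mod_cast this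
  have hNpos : 0 < N := by
    have : (0:ℝ) < (N:ℝ) := by rw [hNcast]; nlinarith
    exact_mod_cast this
  have hNR : (0:ℝ) < (N:ℝ) := by exact_mod_cast hNpos
  have htotal_pos : 0 < N.choose m := Nat.choose_pos hmN
  have htotR : (0:ℝ) < (N.choose m : ℝ) := by exact_mod_cast htotal_pos
  -- the key probability bound
  have hdiv : (0:ℝ) ≤ ((N:ℝ) - m)/N := by
    have : (m:ℝ) ≤ N := by exact_mod_cast hmN
    apply div_nonneg (by linarith) (le_of_lt hNR)
  have hexp1 : ((N:ℝ) - m)/N ≤ Real.exp (-((m:ℝ)/N)) := by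
    have h := Real.add_one_le_exp (-((m:ℝ)/N))
    have heq2 : ((N:ℝ) - m)/N = -((m:ℝ)/N) + 1 := by field_simp; ring
    rw [heq2]
    exact h
  have hKexp : (((N:ℝ) - m)/N)^K ≤ Real.exp (-(3*(n:ℝ))) := by
    calc (((N:ℝ) - m)/N)^K ≤ (Real.exp (-((m:ℝ)/N)))^K :=
          pow_le_pow_left₀ hdiv hexp1 K
      _ = Real.exp ((K:ℝ) * (-((m:ℝ)/N))) := by
          rw [← Real.exp_nat_mul]
      _ ≤ Real.exp (-(3*(n:ℝ))) := by
          apply Real.exp_le_exp.mpr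
          have hKmN : 3*(n:ℝ) * N ≤ (K:ℝ) * m := by
            rw [hNcast, hmcast]
            nlinarith [hKcast, hnR, sq_nonneg ((n:ℝ) - 1000)]
          have h2 : 3*(n:ℝ) ≤ (K:ℝ) * m / N := by
            rw [le_div_iff₀ hNR]; linarith
          have h3 : (K:ℝ) * (-((m:ℝ)/N)) = -((K:ℝ)*m/N) := by ring
          rw [h3]
          linarith
  -- counting part
  have hbad := bad_card_le (show 24 ≤ n by omega) m
  set F := Finset.powersetCard m (Tn n) with hF
  set good := F.filter (fun E => everyHalfSetHasBigComponent n (1/24) E) with hgood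
  set bad := F.filter (fun E => ¬ everyHalfSetHasBigComponent n (1/24) E) with hbadset
  have hFcard : F.card = N.choose m := by
    rw [hF, Finset.card_powersetCard, Tn_card]
  have hsplit : good.card + bad.card = F.card :=
    Finset.card_filter_add_card_filter_not _
  have hnum : {E ∈ edgeSets n ⌈(100:ℝ) * n⌉₊ |
      everyHalfSetHasBigComponent n (1/24) E}.ncard = good.card := by
    rw [hm_eq, ← Set.ncard_coe_finset good]
    congr 1
    ext E
    simp only [Set.mem_setOf_eq, edgeSets_eq n m, hgood, Finset.mem_filter, Finset.mem_coe,
      hF, Finset.mem_powersetCard]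
  have hden : (edgeSets n ⌈(100:ℝ) * n⌉₊).ncard = N.choose m := by
    rw [hm_eq, edgeSets_eq, Set.ncard_coe_finset, hFcard]
  have hbadR : (bad.card : ℝ) ≤ (4*Real.exp (-3))^n * (N.choose m) := by
    calc (bad.card : ℝ) ≤ ((4^n * ((N - K).choose m) : ℕ) : ℝ) := by exact_mod_cast hbad
      _ = (4:ℝ)^n * (((N-K).choose m : ℕ) : ℝ) := by push_cast; ring
      _ ≤ (4:ℝ)^n * ((((N:ℝ) - m)/N)^K * (N.choose m)) := by
          apply mul_le_mul_of_nonneg_left (choose_sub_le N m K hKN hmN) (by positivity)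
      _ ≤ (4:ℝ)^n * (Real.exp (-(3*(n:ℝ))) * (N.choose m)) := by
          apply mul_le_mul_of_nonneg_left _ (by positivity)
          apply mul_le_mul_of_nonneg_right hKexp (by positivity)
      _ = (4*Real.exp (-3))^n * (N.choose m) := by
          rw [show (-(3*(n:ℝ))) = (n:ℕ) * (-3) by push_cast; ring, Real.exp_nat_mul, mul_pow]
          ring
  have hble : bad.card ≤ N.choose m := by omega
  have hgoodR : ((good.card : ℕ) : ℝ) = (N.choose m : ℝ) - (bad.card : ℝ) := by
    have h9 : good.card = N.choose m - bad.card := by omega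
    rw [h9, Nat.cast_sub hble]
  constructor
  · rw [hnum, hden, hgoodR]
    rw [sub_div, div_self (ne_of_gt htotR)]
    have h10 : (bad.card : ℝ)/(N.choose m : ℝ) ≤ (4*Real.exp (-3))^n := by
      rw [div_le_iff₀ htotR]
      exact hbadR
    linarith
  · rw [hnum, hden]
    rw [div_le_one htotR]
    have := Finset.card_filter_le F (fun E => everyHalfSetHasBigComponent n (1/24) E)
    exact_mod_cast hFcard ▸ this


/-- There are constants `c > 0` and `δ > 0` such that, with
`m = ⌈c·n⌉`, w.h.p. the uniform random graph `G(n,m)` has the property that every set of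
`⌈n/2⌉` vertices induces a subgraph containing a connected component with at least `δ·n`
vertices. (The probability is the proportion of admissible edge sets with the property.) -/
theorem vertex_achlioptas_offline_giant :
    ∃ c : ℝ, 0 < c ∧ ∃ δ : ℝ, 0 < δ ∧
      Tendsto
        (fun n => ((Set.ncard {E ∈ edgeSets n ⌈c * n⌉₊ |
              everyHalfSetHasBigComponent n δ E}) : ℝ)
            / ((Set.ncard (edgeSets n ⌈c * n⌉₊)) : ℝ))
        atTop (nhds 1) := by
  refine ⟨100, by norm_num, 1/24, by norm_num, ?_⟩
  have hr0 : (0:ℝ) ≤ 4*Real.exp (-3) := by positivity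
  have hr1 : 4*Real.exp (-3) < 1 := by
    have h4 : (4:ℝ) < Real.exp 3 := by
      have := Real.add_one_lt_exp (by norm_num : (3:ℝ) ≠ 0)
      linarith
    rw [Real.exp_neg, ← div_eq_mul_inv, div_lt_one (Real.exp_pos 3)]
    exact h4
  have hg : Tendsto (fun n : ℕ => 1 - (4*Real.exp (-3))^n) atTop (nhds 1) := by
    have h1 := tendsto_pow_atTop_nhds_zero_of_lt_one hr0 hr1
    have h2 := Filter.Tendsto.const_sub (1:ℝ) h1
    simpa using h2
  apply tendsto_of_tendsto_of_tendsto_of_le_of_le' hg tendsto_const_nhds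
  · filter_upwards [eventually_ge_atTop 1000] with n hn
    exact (per_n hn).1
  · filter_upwards [eventually_ge_atTop 1000] with n hn
    exact (per_n hn).2

end
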